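/- Let Φ be a stationary random sequence in [0,∞) whose finite-dimensional distribution functions satisfy F^{[d+1]}(t_0, t_1, …, t_d) = ∫₀^{t_0} [F^{[d]}(t_1,…,t_d) − F^{[d+1]}(s, t_1, …, t_d)] ds for all d ≥ 0 and t_j ≥ 0 (with F^{[0]} := 1). Then Φ is an iid sequence of standard exponentially distributed random variables. -/

import Mathlib

open MeasureTheory ProbabilityTheory Filter Topology Set

section Aux
open intervalIntegral

lemma key_ode_aux (C : ℝ) (G : ℝ → ℝ) (hmono : Monotone G)
    (hF : ∀ t : ℝ, 0 ≤ t → G t = ∫ s in (0:ℝ)..t, (C - G s)) :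
    ∀ t : ℝ, 0 ≤ t → G t = C * (1 - Real.exp (-t)) := by
  have hGmeas : Measurable G := hmono.measurable
  have hint : ∀ a b : ℝ, IntervalIntegrable (fun s => C - G s) volume a b := by
    intro a b
    exact (_root_.intervalIntegrable_const (c := C)).sub
      (hmono.monotoneOn _).intervalIntegrable
  have hF0 : G 0 = 0 := by simpa using hF 0 le_rfl
  have hcont : ContinuousOn G (Ici 0) := by
    intro t ht
    have hTgt : t < t + 1 := by linarith
    set T := t + 1 with hT
    have hTpos : (0:ℝ) ≤ T := le_trans ht.out hTgt.le
    set K := |C| + |G 0| + |G T| with hK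
    have hbound : ∀ s ∈ Icc (0:ℝ) T, |C - G s| ≤ K := by
      intro s hs
      have h1 : G 0 ≤ G s := hmono hs.1
      have h2 : G s ≤ G T := hmono hs.2
      have h3 : |G s| ≤ |G 0| + |G T| :=
        abs_le.mpr ⟨by linarith [neg_abs_le (G 0), abs_nonneg (G T)],
          by linarith [le_abs_self (G T), abs_nonneg (G 0)]⟩
      calc |C - G s| ≤ |C| + |G s| := abs_sub _ _
        _ ≤ K := by rw [hK]; linarith
    have hlip : ∀ a ∈ Icc (0:ℝ) T, ∀ b ∈ Icc (0:ℝ) T, |G b - G a| ≤ K * |b - a| := by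
      intro a ha b hb
      have hdiff : G b - G a = ∫ s in a..b, (C - G s) := by
        rw [hF b hb.1, hF a ha.1, ← intervalIntegral.integral_interval_sub_left
          (hint 0 b) (hint 0 a)]
      rw [hdiff, ← Real.norm_eq_abs]
      apply intervalIntegral.norm_integral_le_of_norm_le_const
      intro x hx
      rw [Real.norm_eq_abs]
      apply hbound
      rcases le_total a b with h | h
      · rw [uIoc_of_le h] at hx
        exact ⟨le_of_lt (lt_of_le_of_lt ha.1 hx.1), le_trans hx.2 hb.2⟩
      · rw [uIoc_of_ge h] at hx
        exact ⟨le_of_lt (lt_of_le_of_lt hb.1 hx.1), le_trans hx.2 ha.2⟩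
    have hK0 : (0:ℝ) ≤ K := le_trans (abs_nonneg _) (hbound 0 ⟨le_rfl, hTpos⟩)
    have hlip' : LipschitzOnWith (Real.toNNReal K) G (Icc 0 T) := by
      apply LipschitzOnWith.of_dist_le_mul
      intro a ha b hb
      rw [Real.dist_eq, Real.dist_eq, Real.coe_toNNReal K hK0, abs_sub_comm (G a) (G b),
        abs_sub_comm a b]
      exact hlip a ha b hb
    have h1 : ContinuousWithinAt G (Icc 0 T) t :=
      hlip'.continuousOn t ⟨ht, hTgt.le⟩
    apply h1.mono_of_mem_nhdsWithin
    rw [← Ici_inter_Iic]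
    exact inter_mem_nhdsWithin _ (Iic_mem_nhds hTgt)
  intro t ht
  rcases eq_or_lt_of_le ht with h | h
  · rw [← h]; simp [hF0]
  set u : ℝ → ℝ := fun s => G s * Real.exp s - C * (Real.exp s - 1) with hu
  have hderiv : ∀ x ∈ Ico (0:ℝ) t, HasDerivWithinAt u 0 (Ici x) x := by
    intro x hx
    have hGderiv : HasDerivWithinAt G (C - G x) (Ici x) x := by
      have h1 : HasDerivWithinAt (fun r => ∫ s in (0:ℝ)..r, (C - G s)) (C - G x) (Ici x) x := by
        apply intervalIntegral.integral_hasDerivWithinAt_right (hint 0 x)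
        · exact (measurable_const.sub hGmeas).stronglyMeasurable.stronglyMeasurableAtFilter
        · exact ((continuousOn_const.sub hcont).continuousWithinAt hx.1).mono
            (fun y hy => le_trans hx.1 (le_of_lt hy))
      exact h1.congr_of_mem (fun y hy => hF y (le_trans hx.1 hy)) self_mem_Ici
    have h2 : HasDerivWithinAt u ((C - G x) * Real.exp x + G x * Real.exp x - C * Real.exp x)
        (Ici x) x :=
      (hGderiv.mul ((Real.hasDerivAt_exp x).hasDerivWithinAt)).sub
        (((Real.hasDerivAt_exp x).hasDerivWithinAt.sub_const 1).const_mul C)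
    convert h2 using 1
    ring
  have hucont : ContinuousOn u (Icc 0 t) :=
    ((hcont.mono (fun y hy => hy.1)).mul Real.continuous_exp.continuousOn).sub
      (continuousOn_const.mul (Real.continuous_exp.continuousOn.sub continuousOn_const))
  have hconst := constant_of_has_deriv_right_zero hucont hderiv t (right_mem_Icc.mpr ht)
  have hu0 : u 0 = 0 := by simp [hu, hF0]
  have hut : G t * Real.exp t - C * (Real.exp t - 1) = 0 := by
    have h2 : u t = u 0 := hconst
    rw [hu0] at h2; exact h2
  have hexp : Real.exp t ≠ 0 := (Real.exp_pos t).ne'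
  rw [Real.exp_neg]
  field_simp
  nlinarith [hut]

lemma key_ode (C : ℝ) (F : ℝ → ℝ) (hmono : MonotoneOn F (Ici 0))
    (hF : ∀ t : ℝ, 0 ≤ t → F t = ∫ s in (0:ℝ)..t, (C - F s)) :
    ∀ t : ℝ, 0 ≤ t → F t = C * (1 - Real.exp (-t)) := by
  set G : ℝ → ℝ := fun s => F (max s 0) with hGdef
  have hG : ∀ s : ℝ, 0 ≤ s → G s = F s := fun s hs => by
    simp [hGdef, max_eq_left hs]
  have hGmono : Monotone G := fun a b hab =>
    hmono (mem_Ici.mpr (le_max_right a 0)) (mem_Ici.mpr (le_max_right b 0)) (max_le_max hab le_rfl)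
  have hGF : ∀ t : ℝ, 0 ≤ t → G t = ∫ s in (0:ℝ)..t, (C - G s) := by
    intro t ht
    rw [hG t ht, hF t ht]
    apply intervalIntegral.integral_congr
    intro s hs
    rw [uIcc_of_le ht] at hs
    simp only [hG s hs.1]
  intro t ht
  rw [← hG t ht]
  exact key_ode_aux C G hGmono hGF t ht

end Aux

/-- A stationary random sequence `Φ` in `[0,∞)` whose finite-dimensional distribution
functions satisfy
`F^{[d+1]}(t₀,t₁,…,t_d) = ∫₀^{t₀} (F^{[d]}(t₁,…,t_d) - F^{[d+1]}(s,t₁,…,t_d)) ds`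
for all `d ≥ 0` and `t_j ≥ 0` is an iid sequence of standard exponentially distributed
random variables. -/
theorem stmt9 {Ω : Type*} [MeasurableSpace Ω] (μ : Measure Ω) [IsProbabilityMeasure μ]
    (Φ : ℕ → Ω → ℝ) (hmeas : ∀ j, Measurable (Φ j)) (hnn : ∀ j ω, 0 ≤ Φ j ω)
    (hstat : ∀ (k d : ℕ) (t : Fin d → ℝ),
      μ {ω | ∀ i : Fin d, Φ (k + i.val) ω ≤ t i} = μ {ω | ∀ i : Fin d, Φ i.val ω ≤ t i})
    (heq : ∀ (d : ℕ) (t0 : ℝ) (t : Fin d → ℝ), 0 ≤ t0 → (∀ i, 0 ≤ t i) →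
      (μ {ω | Φ 0 ω ≤ t0 ∧ ∀ i : Fin d, Φ (i.val + 1) ω ≤ t i}).toReal
        = ∫ s in (0 : ℝ)..t0,
            ((μ {ω | ∀ i : Fin d, Φ i.val ω ≤ t i}).toReal
              - (μ {ω | Φ 0 ω ≤ s ∧ ∀ i : Fin d, Φ (i.val + 1) ω ≤ t i}).toReal)) :
    (∀ (j : ℕ) (t : ℝ), 0 ≤ t →
        (μ {ω | Φ j ω ≤ t}).toReal = 1 - Real.exp (-t)) ∧
      iIndepFun (m := fun _ : ℕ => (inferInstance : MeasurableSpace ℝ)) Φ μ := by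
  classical
  have hms : ∀ (j : ℕ) (r : ℝ), MeasurableSet {ω | Φ j ω ≤ r} :=
    fun j r => (hmeas j) measurableSet_Iic
  -- the product formula for consecutive blocks
  have hprod : ∀ (d : ℕ) (t : Fin d → ℝ), (∀ i, 0 ≤ t i) →
      (μ {ω | ∀ i : Fin d, Φ i.val ω ≤ t i}).toReal
        = ∏ i : Fin d, (1 - Real.exp (-(t i))) := by
    intro d
    induction d with
    | zero =>
      intro t _
      have h0 : {ω : Ω | ∀ i : Fin 0, Φ i.val ω ≤ t i} = univ := by
        ext ω; simp
      simp [h0]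
    | succ d ih =>
      intro t htnn
      set C := ∏ i : Fin d, (1 - Real.exp (-(t i.succ))) with hC
      set F : ℝ → ℝ := fun s =>
        (μ {ω | Φ 0 ω ≤ s ∧ ∀ i : Fin d, Φ (i.val + 1) ω ≤ t i.succ}).toReal with hFdef
      have hmonoF : MonotoneOn F (Ici 0) := by
        intro a _ b _ hab
        exact ENNReal.toReal_mono (measure_ne_top μ _)
          (measure_mono (fun ω hω => ⟨le_trans hω.1 hab, hω.2⟩))
      have hFint : ∀ s : ℝ, 0 ≤ s → F s = ∫ u in (0:ℝ)..s, (C - F u) := by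
        intro s hs
        have h1 := heq d s (fun i => t i.succ) hs (fun i => htnn i.succ)
        rw [ih (fun i => t i.succ) (fun i => htnn i.succ)] at h1
        exact h1
      have hFval := key_ode C F hmonoF hFint (t 0) (htnn 0)
      have hset : {ω : Ω | ∀ i : Fin (d+1), Φ i.val ω ≤ t i}
          = {ω | Φ 0 ω ≤ t 0 ∧ ∀ i : Fin d, Φ (i.val + 1) ω ≤ t i.succ} := by
        ext ω
        constructor
        · intro h; exact ⟨h 0, fun i => h i.succ⟩
        · rintro ⟨h0, hrest⟩ i
          rcases Fin.eq_zero_or_eq_succ i with rfl | ⟨j, rfl⟩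
          · exact h0
          · exact hrest j
      rw [hset]
      have : (μ {ω | Φ 0 ω ≤ t 0 ∧ ∀ i : Fin d, Φ (i.val + 1) ω ≤ t i.succ}).toReal
          = F (t 0) := rfl
      rw [this, hFval, Fin.prod_univ_succ]
      ring
  -- the marginals
  have hmarg : ∀ (j : ℕ) (r : ℝ), 0 ≤ r → (μ {ω | Φ j ω ≤ r}).toReal = 1 - Real.exp (-r) := by
    intro j r hr
    have h1 := hstat j 1 (fun _ => r)
    have h2 : {ω : Ω | ∀ i : Fin 1, Φ (j + i.val) ω ≤ r} = {ω | Φ j ω ≤ r} := by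
      ext ω; simp [Fin.forall_fin_one]
    have h3 : {ω : Ω | ∀ i : Fin 1, Φ i.val ω ≤ (fun _ : Fin 1 => r) i}
        = {ω | ∀ i : Fin 1, Φ i.val ω ≤ r} := rfl
    rw [h2] at h1
    rw [h1]
    have h4 := hprod 1 (fun _ => r) (fun _ => hr)
    rw [h4]
    simp
  refine ⟨hmarg, ?_⟩
  -- negative thresholds give the empty set
  have hempty : ∀ (j : ℕ) (r : ℝ), r < 0 → Φ j ⁻¹' Iic r = ∅ := by
    intro j r hr
    ext ω
    simp only [mem_preimage, mem_Iic, mem_empty_iff_false, iff_false, not_le]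
    exact lt_of_lt_of_le hr (hnn j ω)
  -- the key finite-dimensional factorization for arbitrary finite index sets
  have hcore : ∀ (S : Finset ℕ) (τ : ℕ → ℝ),
      μ (⋂ i ∈ S, Φ i ⁻¹' Iic (τ i)) = ∏ i ∈ S, μ (Φ i ⁻¹' Iic (τ i)) := by
    intro S τ
    by_cases hneg : ∃ i ∈ S, τ i < 0
    · obtain ⟨i0, hi0S, hi0⟩ := hneg
      have he : Φ i0 ⁻¹' Iic (τ i0) = ∅ := hempty i0 (τ i0) hi0
      have hL : μ (⋂ i ∈ S, Φ i ⁻¹' Iic (τ i)) = 0 := by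
        refine le_antisymm ?_ zero_le
        calc μ (⋂ i ∈ S, Φ i ⁻¹' Iic (τ i)) ≤ μ (Φ i0 ⁻¹' Iic (τ i0)) :=
              measure_mono (biInter_subset_of_mem hi0S)
          _ = 0 := by rw [he, measure_empty]
      rw [hL, eq_comm]
      exact Finset.prod_eq_zero hi0S (by rw [he, measure_empty])
    push_neg at hneg
    -- all thresholds nonnegative
    have hne1 : μ (⋂ i ∈ S, Φ i ⁻¹' Iic (τ i)) ≠ ⊤ := measure_ne_top μ _
    have hne2 : ∏ i ∈ S, μ (Φ i ⁻¹' Iic (τ i)) ≠ ⊤ :=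
      (ENNReal.prod_lt_top (fun i _ => measure_lt_top μ _)).ne
    rw [← ENNReal.toReal_eq_toReal_iff' hne1 hne2, ENNReal.toReal_prod]
    have hfac : ∀ i ∈ S, (μ (Φ i ⁻¹' Iic (τ i))).toReal = 1 - Real.exp (-(τ i)) := by
      intro i hi
      exact hmarg i (τ i) (hneg i hi)
    rw [Finset.prod_congr rfl hfac]
    set P := ∏ i ∈ S, (1 - Real.exp (-(τ i))) with hP
    set x := (μ (⋂ i ∈ S, Φ i ⁻¹' Iic (τ i))).toReal with hx
    set n := S.sup id + 1 with hn
    have hSn : ∀ i ∈ S, i < n := fun i hi => Nat.lt_succ_of_le (Finset.le_sup (f := id) hi)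
    -- the block estimate
    set b : ℝ → ℝ := fun M => ∏ j : Fin n,
      (1 - Real.exp (-(if (j : ℕ) ∈ S then τ j else M))) with hb
    have hBle : ∀ M : ℝ, 0 ≤ M → b M ≤ x := by
      intro M hM
      set TM : Fin n → ℝ := fun j => if (j : ℕ) ∈ S then τ j else M with hTM
      have hTnn : ∀ j, 0 ≤ TM j := by
        intro j
        by_cases hj : (j : ℕ) ∈ S
        · simp only [hTM, if_pos hj]; exact hneg _ hj
        · simp only [hTM, if_neg hj]; exact hM
      have hblock := hprod n TM hTnn
      have hsub1 : {ω : Ω | ∀ j : Fin n, Φ j.val ω ≤ TM j} ⊆ ⋂ i ∈ S, Φ i ⁻¹' Iic (τ i) := by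
        intro ω hω
        rw [mem_iInter₂]
        intro i hi
        have := hω ⟨i, hSn i hi⟩
        simp only [hTM, hi, if_pos] at this
        exact this
      calc b M = (μ {ω : Ω | ∀ j : Fin n, Φ j.val ω ≤ TM j}).toReal := hblock.symm
        _ ≤ x := ENNReal.toReal_mono (measure_ne_top μ _) (measure_mono hsub1)
    have hxle : ∀ M : ℝ, 0 ≤ M → x ≤ b M + n * Real.exp (-M) := by
      intro M hM
      set TM : Fin n → ℝ := fun j => if (j : ℕ) ∈ S then τ j else M with hTM
      have hTnn : ∀ j, 0 ≤ TM j := by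
        intro j
        by_cases hj : (j : ℕ) ∈ S
        · simp only [hTM, if_pos hj]; exact hneg _ hj
        · simp only [hTM, if_neg hj]; exact hM
      have hblock := hprod n TM hTnn
      have hsub2 : (⋂ i ∈ S, Φ i ⁻¹' Iic (τ i)) ⊆
          {ω : Ω | ∀ j : Fin n, Φ j.val ω ≤ TM j} ∪ ⋃ j : Fin n, {ω | M < Φ j.val ω} := by
        intro ω hω
        by_cases hall : ∀ j : Fin n, Φ j.val ω ≤ TM j
        · exact Or.inl hall
        · push_neg at hall
          obtain ⟨j, hj⟩ := hall
          refine Or.inr (mem_iUnion.mpr ⟨j, ?_⟩)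
          by_cases hjS : (j : ℕ) ∈ S
          · exfalso
            have hmem := (mem_iInter₂.mp hω) (j : ℕ) hjS
            simp only [hTM, if_pos hjS] at hj
            exact absurd hmem (not_le.mpr hj)
          · simp only [hTM, if_neg hjS] at hj
            exact hj
      have hcomp : ∀ j : ℕ, (μ {ω | M < Φ j ω}).toReal = Real.exp (-M) := by
        intro j
        have hc : {ω : Ω | M < Φ j ω} = {ω | Φ j ω ≤ M}ᶜ := by
          ext ω; simp [not_le]
        rw [hc, measure_compl (hms j M) (measure_ne_top μ _), measure_univ,
          ENNReal.toReal_sub_of_le prob_le_one ENNReal.one_ne_top,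
          ENNReal.toReal_one, hmarg j M hM]
        ring
      have hstep : μ (⋂ i ∈ S, Φ i ⁻¹' Iic (τ i)) ≤
          μ {ω : Ω | ∀ j : Fin n, Φ j.val ω ≤ TM j} + ∑ j : Fin n, μ {ω | M < Φ j.val ω} :=
        le_trans (measure_mono hsub2)
          (le_trans (measure_union_le _ _)
            (add_le_add_right (measure_iUnion_fintype_le μ _) _))
      have hfin : μ {ω : Ω | ∀ j : Fin n, Φ j.val ω ≤ TM j}
          + ∑ j : Fin n, μ {ω | M < Φ j.val ω} ≠ ⊤ := by
        refine ENNReal.add_ne_top.mpr ⟨measure_ne_top μ _, ?_⟩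
        exact (ENNReal.sum_lt_top.mpr (fun j _ => measure_lt_top μ _)).ne
      calc x ≤ (μ {ω : Ω | ∀ j : Fin n, Φ j.val ω ≤ TM j}
            + ∑ j : Fin n, μ {ω | M < Φ j.val ω}).toReal :=
            ENNReal.toReal_mono hfin hstep
        _ = b M + n * Real.exp (-M) := by
            rw [ENNReal.toReal_add (measure_ne_top μ _)
              ((ENNReal.sum_lt_top.mpr (fun j _ => measure_lt_top μ _)).ne),
              ENNReal.toReal_sum (fun j _ => measure_ne_top μ _), hblock]
            congr 1
            have hall : ∀ a : Fin n, (μ {ω | M < Φ (a : ℕ) ω}).toReal = Real.exp (-M) :=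
              fun a => hcomp _
            simp only [hall]
            simp [Finset.sum_const, Finset.card_univ, nsmul_eq_mul]
    -- limits
    have hbtendsto : Tendsto b atTop (𝓝 P) := by
      have hterm : ∀ j : Fin n, Tendsto
          (fun M => 1 - Real.exp (-(if (j : ℕ) ∈ S then τ j else M))) atTop
          (𝓝 (if (j : ℕ) ∈ S then 1 - Real.exp (-(τ j)) else 1)) := by
        intro j
        by_cases hj : (j : ℕ) ∈ S
        · simp only [hj, if_pos]
          exact tendsto_const_nhds
        · simp only [hj, if_neg, not_false_iff]
          have := Real.tendsto_exp_neg_atTop_nhds_zero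
          have h2 : Tendsto (fun M : ℝ => 1 - Real.exp (-M)) atTop (𝓝 (1 - 0)) :=
            tendsto_const_nhds.sub this
          simpa using h2
      have h3 : Tendsto b atTop
          (𝓝 (∏ j : Fin n, (if (j : ℕ) ∈ S then 1 - Real.exp (-(τ j)) else 1))) :=
        tendsto_finset_prod _ (fun j _ => hterm j)
      have h4 : (∏ j : Fin n, (if (j : ℕ) ∈ S then 1 - Real.exp (-(τ j)) else 1)) = P := by
        rw [Fin.prod_univ_eq_prod_range (fun i => if i ∈ S then 1 - Real.exp (-(τ i)) else 1) n,
          Finset.prod_ite_mem (Finset.range n) S (fun i => 1 - Real.exp (-(τ i))),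
          Finset.inter_eq_right.mpr (fun i hi => Finset.mem_range.mpr (hSn i hi))]
      rwa [h4] at h3
    have hP_le_x : P ≤ x :=
      le_of_tendsto hbtendsto (eventually_atTop.mpr ⟨0, fun M hM => hBle M hM⟩)
    have hx_le_P : x ≤ P := by
      have h5 : Tendsto (fun M => b M + n * Real.exp (-M)) atTop (𝓝 (P + n * 0)) :=
        hbtendsto.add (tendsto_const_nhds.mul Real.tendsto_exp_neg_atTop_nhds_zero)
      have h6 : Tendsto (fun M => b M + n * Real.exp (-M)) atTop (𝓝 P) := by
        simpa using h5
      exact ge_of_tendsto h6 (eventually_atTop.mpr ⟨0, fun M hM => hxle M hM⟩)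
    linarith
  -- assemble independence via π-systems
  rw [iIndepFun_iff_iIndep]
  apply ProbabilityTheory.iIndepSets.iIndep
    (π := fun i => {s | ∃ r : ℝ, s = Φ i ⁻¹' Iic r})
  · exact fun i => (hmeas i).comap_le
  · rintro i s ⟨r, rfl⟩ u ⟨r', rfl⟩ -
    exact ⟨min r r', by rw [← Set.preimage_inter, Set.Iic_inter_Iic]⟩
  · intro i
    rw [show (inferInstance : MeasurableSpace ℝ) = borel ℝ from BorelSpace.measurable_eq,
      borel_eq_generateFrom_Iic ℝ, MeasurableSpace.comap_generateFrom]
    congr 1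
    ext u
    simp only [mem_image, mem_range, exists_exists_eq_and, mem_setOf_eq]
    constructor
    · rintro ⟨r, rfl⟩; exact ⟨r, rfl⟩
    · rintro ⟨r, rfl⟩; exact ⟨r, rfl⟩
  · rw [iIndepSets_iff]
    intro S f hf
    set τ : ℕ → ℝ := fun i => if h : i ∈ S then (hf i h).choose else 0 with hτ
    have hfτ : ∀ i ∈ S, f i = Φ i ⁻¹' Iic (τ i) := by
      intro i hi
      simp only [hτ, dif_pos hi]
      exact (hf i hi).choose_spec
    rw [Finset.prod_congr rfl (fun i hi => by rw [hfτ i hi]),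
      show (⋂ i ∈ S, f i) = ⋂ i ∈ S, Φ i ⁻¹' Iic (τ i) from iInter₂_congr hfτ]
    exact hcore S τ
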